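/- Let γ > 0 and b > 0 satisfy 1 − ρ(γ)·b > 0, and let T be the EAR recursion map built from γ and b. Then the limit as x tends to γ (with x ≠ γ, x > 0) of (T(x) − γ)/(x − γ) equals 0; that is, the EAR recursion has superlinear convergence rate at its fixed point γ. -/

import Mathlib

open Filter Topology

/-- ρ(γ) = 1/((1+γ)·√(γ²+2γ)) -/
noncomputable def rho (γ : ℝ) : ℝ := 1 / ((1 + γ) * Real.sqrt (γ ^ 2 + 2 * γ))

/-- μ(γ) = √(γ²+2γ)/(1+γ) − ln(1+γ)/((1+γ)·√(γ²+2γ)) -/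
noncomputable def mu (γ : ℝ) : ℝ :=
  Real.sqrt (γ ^ 2 + 2 * γ) / (1 + γ) -
    Real.log (1 + γ) / ((1 + γ) * Real.sqrt (γ ^ 2 + 2 * γ))

/-- The EAR recursion map built from γ and b, where
c = ln(1+γ) − b·√(γ²+2γ)/(1+γ). -/
noncomputable def EAR (γ b x : ℝ) : ℝ :=
  Real.exp (((Real.log (1 + γ) - b * Real.sqrt (γ ^ 2 + 2 * γ) / (1 + γ)) + mu x * b) /
    (1 - rho x * b)) - 1

/-- Superlinear convergence of the EAR recursion at its fixed point γ:
(T(x) − γ)/(x − γ) → 0 as x → γ with x ≠ γ, x > 0. -/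
theorem stmt_1 (γ b : ℝ) (hγ : 0 < γ) (hb : 0 < b) (hpos : 0 < 1 - rho γ * b) :
    Tendsto (fun x => (EAR γ b x - γ) / (x - γ))
      (𝓝[{x : ℝ | x ≠ γ ∧ 0 < x}] γ) (𝓝 0) := by
  have hq : 0 < γ ^ 2 + 2 * γ := by nlinarith
  set s := Real.sqrt (γ ^ 2 + 2 * γ) with hs
  have hspos : 0 < s := Real.sqrt_pos.mpr hq
  have hs2 : s ^ 2 = γ ^ 2 + 2 * γ := Real.sq_sqrt hq.le
  have h1γ : (0:ℝ) < 1 + γ := by linarith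
  have hsne : s ≠ 0 := hspos.ne'
  have h1γne : (1 + γ) ≠ 0 := h1γ.ne'
  have hdne : (1 + γ) * s ≠ 0 := mul_ne_zero h1γne hsne
  set L := Real.log (1 + γ) with hL
  set c := L - b * s / (1 + γ) with hc
  set ρ' := -(s ^ 2 + (1 + γ) ^ 2) / (s ^ 3 * (1 + γ) ^ 2) with hρ'
  -- basic derivative pieces
  have hpoly : HasDerivAt (fun x : ℝ => x ^ 2 + 2 * x) (2 * γ + 2) γ := by
    exact ((hasDerivAt_pow 2 γ).add ((hasDerivAt_id γ).const_mul 2)).congr_deriv (by norm_num)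
  have hg : HasDerivAt (fun x : ℝ => Real.sqrt (x ^ 2 + 2 * x)) ((1 + γ) / s) γ := by
    have := (Real.hasDerivAt_sqrt hq.ne').comp γ hpoly
    refine this.congr_deriv (Eq.symm ?_)
    rw [← hs]; field_simp; ring
  have hone : HasDerivAt (fun x : ℝ => 1 + x) 1 γ := by
    simpa using (hasDerivAt_id γ).const_add 1
  have hden : HasDerivAt (fun x : ℝ => (1 + x) * Real.sqrt (x ^ 2 + 2 * x))
      (1 * s + (1 + γ) * ((1 + γ) / s)) γ := by
    have := hone.mul hg
    exact this
  have hln : HasDerivAt (fun x : ℝ => Real.log (1 + x)) (1 / (1 + γ)) γ := by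
    have := (Real.hasDerivAt_log h1γne).comp γ hone
    exact this.congr_deriv (by simp)
  -- derivative of rho
  have hrho : HasDerivAt rho ρ' γ := by
    have := (hasDerivAt_const γ (1:ℝ)).div hden hdne
    show HasDerivAt (fun x : ℝ => 1 / ((1 + x) * Real.sqrt (x ^ 2 + 2 * x))) ρ' γ
    refine this.congr_deriv (Eq.symm ?_)
    rw [hρ', ← hs]; field_simp; ring
  -- derivative of mu
  have hmu : HasDerivAt mu (-(L * ρ')) γ := by
    have h1 := hg.div hone h1γne
    have h2 := hln.div hden hdne
    have := h1.sub h2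
    show HasDerivAt (fun x : ℝ => Real.sqrt (x ^ 2 + 2 * x) / (1 + x) -
        Real.log (1 + x) / ((1 + x) * Real.sqrt (x ^ 2 + 2 * x))) (-(L * ρ')) γ
    refine this.congr_deriv (Eq.symm ?_)
    rw [hρ', ← hs, ← hL]
    field_simp
    linear_combination s ^ 2 * hs2
  -- fixed point value
  have hval : (c + mu γ * b) / (1 - rho γ * b) = L := by
    have hnum : c + mu γ * b = L * (1 - rho γ * b) := by
      rw [hc, mu, rho, ← hs, ← hL]; field_simp; ring
    rw [hnum, mul_div_assoc, div_self hpos.ne', mul_one]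
  have hfix : EAR γ b γ = γ := by
    rw [EAR, ← hs, ← hL, ← hc]
    rw [hval, hL, Real.exp_log h1γ]
    ring
  -- derivative of EAR is zero
  have hN : HasDerivAt (fun x => c + mu x * b) (-(L * ρ') * b) γ :=
    (hmu.mul_const b).const_add c
  have hD : HasDerivAt (fun x => 1 - rho x * b) (-(ρ' * b)) γ := by
    simpa using (hrho.mul_const b).const_sub 1
  have hf : HasDerivAt (fun x => (c + mu x * b) / (1 - rho x * b)) 0 γ := by
    have := hN.div hD hpos.ne'
    refine this.congr_deriv (Eq.symm ?_)
    have hNval : c + mu γ * b = L * (1 - rho γ * b) := by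
      rw [hc, mu, rho, ← hs, ← hL]; field_simp; ring
    rw [hNval]
    field_simp
    ring
  have hEAR : HasDerivAt (fun x => EAR γ b x) 0 γ := by
    have := (hf.exp).sub_const 1
    simpa [EAR, ← hs, ← hL, ← hc, mul_zero] using this
  -- conclude via slope
  have hslope := hasDerivAt_iff_tendsto_slope.mp hEAR
  have heq : slope (fun x => EAR γ b x) γ = fun x => (EAR γ b x - γ) / (x - γ) := by
    funext x
    rw [slope_def_field, hfix]
  rw [heq] at hslope
  exact hslope.mono_left (nhdsWithin_mono γ fun x hx => hx.1)
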